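/- There exist constants C₁ > 0 and δ > 0 such that for every a ∈ ℂ with 0 < |a| ≤ δ and every z ∈ ℂ with 1 ≤ |a|^{1/3}·|z| ≤ 3, one has D_a(z) ≠ 0 and |R_a(z)| < C₁·|a|^{2/3}. -/

import Mathlib

set_option maxHeartbeats 1000000


/-- The rational map `R_a` obtained from the Chebyshev–Halley method applied to `z^3-1`. -/
noncomputable def Ra (a z : ℂ) : ℂ :=
  (2*a*z^6 + (15 - a)*z^3 + (3 - a)) / (3*z^2*(5 - a + (1 + a)*z^3))

/-- The denominator of `R_a`. -/
noncomputable def Da (a z : ℂ) : ℂ := 3*z^2*(5 - a + (1 + a)*z^3)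

/-- There is a constant `C₁ > 0`, independent of `a`, such that for `|a|` small enough
(`a ≠ 0`) one has `|R_a(z)| < C₁|a|^{2/3}` on the annulus `1/|a|^{1/3} ≤ |z| ≤ 3/|a|^{1/3}`. -/
theorem stmt_14 :
    ∃ C₁ > (0:ℝ), ∃ δ > (0:ℝ), ∀ a : ℂ, 0 < ‖a‖ → ‖a‖ ≤ δ →
      ∀ z : ℂ, 1 ≤ ‖a‖ ^ ((1:ℝ)/3) * ‖z‖ →
        ‖a‖ ^ ((1:ℝ)/3) * ‖z‖ ≤ 3 →
        Da a z ≠ 0 ∧ ‖Ra a z‖ < C₁ * ‖a‖ ^ ((2:ℝ)/3) := by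
  refine ⟨1300, by norm_num, 1/14, by norm_num, ?_⟩
  intro a ha haδ z h1 h3
  set t := ‖a‖ ^ ((1:ℝ)/3) with htdef
  have ht0 : 0 < t := Real.rpow_pos_of_pos ha _
  have ht3 : t ^ 3 = ‖a‖ := by
    rw [htdef, ← Real.rpow_natCast (‖a‖ ^ ((1:ℝ)/3)) 3,
      ← Real.rpow_mul (norm_nonneg a)]
    norm_num
  have ht2 : ‖a‖ ^ ((2:ℝ)/3) = t ^ 2 := by
    rw [htdef, ← Real.rpow_natCast (‖a‖ ^ ((1:ℝ)/3)) 2,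
      ← Real.rpow_mul (norm_nonneg a)]
    norm_num
  set r := ‖z‖ with hrdef
  have hr0 : 0 < r := by nlinarith
  have ha14 : t ^ 3 ≤ 1/14 := ht3 ▸ haδ
  have htr1 : 1 ≤ t * r := h1
  have htr3 : t * r ≤ 3 := h3
  have hX1 : 1 ≤ t^3 * r^3 := by
    have h := pow_le_pow_left₀ zero_le_one htr1 3
    nlinarith [h]
  have hX27 : t^3 * r^3 ≤ 27 := by
    have h := pow_le_pow_left₀ (by positivity : (0:ℝ) ≤ t * r) htr3 3
    nlinarith [h]
  -- bound on 1+a from below and on 15-a, 5-a, 3-a from above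
  have hNb : ‖2*a*z^6 + (15 - a)*z^3 + (3 - a)‖
      ≤ 2*t^3*r^6 + (15 + t^3)*r^3 + (3 + t^3) := by
    have t1 := norm_add_le (2*a*z^6 + (15-a)*z^3) (3-a)
    have t2 := norm_add_le (2*a*z^6) ((15-a)*z^3)
    have e1 : ‖2*a*z^6‖ = 2 * t^3 * r^6 := by
      rw [norm_mul, norm_mul, norm_pow, ht3]; norm_num [hrdef]
    have e2 : ‖(15-a)*z^3‖ ≤ (15 + t^3) * r^3 := by
      rw [norm_mul, norm_pow]
      have : ‖15 - a‖ ≤ 15 + t^3 := by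
        calc ‖15 - a‖ ≤ ‖(15:ℂ)‖ + ‖a‖ := by
              simpa [sub_eq_add_neg] using norm_add_le 15 (-a)
        _ = 15 + t^3 := by rw [ht3]; norm_num
      have h3r : (0:ℝ) ≤ r^3 := by positivity
      exact mul_le_mul_of_nonneg_right this h3r
    have e3 : ‖3 - a‖ ≤ 3 + t^3 := by
      calc ‖3 - a‖ ≤ ‖(3:ℂ)‖ + ‖a‖ := by
            simpa [sub_eq_add_neg] using norm_add_le 3 (-a)
      _ = 3 + t^3 := by rw [ht3]; norm_num
    linarith
  -- lower bound on the factor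
  have hFb : 1 ≤ 2*t^3 * ‖5 - a + (1+a)*z^3‖ := by
    have key : ‖(1+a)*z^3‖
        ≤ ‖5 - a + (1+a)*z^3‖ + ‖5 - a‖ := by
      calc ‖(1+a)*z^3‖
          = ‖(5 - a + (1+a)*z^3) + (a - 5)‖ := by ring_nf
        _ ≤ ‖5 - a + (1+a)*z^3‖ + ‖a - 5‖ :=
            norm_add_le _ _
        _ = ‖5 - a + (1+a)*z^3‖ + ‖5 - a‖ := by
            rw [norm_sub_rev]
    have h1a : 1 - t^3 ≤ ‖1+a‖ := by
      have : (1:ℝ) ≤ ‖1+a‖ + ‖a‖ := by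
        calc (1:ℝ) = ‖(1+a) + (-a)‖ := by norm_num
          _ ≤ _ := by simpa using norm_add_le (1+a) (-a)
      linarith [ht3 ▸ this]
    have e4 : ‖(1+a)*z^3‖ = ‖1+a‖ * r^3 := by
      rw [norm_mul, norm_pow]
    have e5 : ‖5 - a‖ ≤ 5 + t^3 := by
      calc ‖5 - a‖ ≤ ‖(5:ℂ)‖ + ‖a‖ := by
            simpa [sub_eq_add_neg] using norm_add_le 5 (-a)
      _ = 5 + t^3 := by rw [ht3]; norm_num
    have hlow : (1 - t^3) * r^3 ≤ ‖1+a‖ * r^3 := by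
      have h3r : (0:ℝ) ≤ r^3 := by positivity
      exact mul_le_mul_of_nonneg_right h1a h3r
    -- (1-s) r^3 - (5+s) ≥ 1/(2s) with s = t^3 ≤ 1/14, s r^3 ≥ 1
    have ht3pos : 0 < t^3 := by positivity
    nlinarith [mul_pos ht3pos (pow_pos hr0 3)]
  have hDabs : ‖Da a z‖ = 3 * r^2 * ‖5 - a + (1+a)*z^3‖ := by
    rw [Da, norm_mul, norm_mul, norm_pow]; norm_num [hrdef]
  have ht3pos : 0 < t^3 := by positivity
  have hFpos : 0 < ‖5 - a + (1+a)*z^3‖ := by nlinarith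
  have hDpos : 0 < ‖Da a z‖ := by
    rw [hDabs]; positivity
  refine ⟨fun h => by simp [h] at hDpos, ?_⟩
  have hRa : Ra a z = (2*a*z^6 + (15 - a)*z^3 + (3 - a)) / Da a z := rfl
  rw [hRa, norm_div, div_lt_iff₀ hDpos, ht2]
  -- final inequality: multiply by t^3 > 0
  have key1 : t^3 * ‖2*a*z^6 + (15 - a)*z^3 + (3 - a)‖ ≤ 1894 := by
    have : t^3 * (2*t^3*r^6 + (15 + t^3)*r^3 + (3 + t^3)) ≤ 1894 := by
      nlinarith [hX1, hX27, ha14, ht3pos, sq_nonneg (t^3*r^3 - 27), sq_nonneg (t^3*r^3)]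
    nlinarith [hNb, ht3pos]
  have key2 : 1950 ≤ t^3 * (1300 * t^2 * ‖Da a z‖) := by
    rw [hDabs]
    have h2 : 1 ≤ t^2 * r^2 := by nlinarith [mul_pos ht0 hr0]
    nlinarith [mul_le_mul_of_nonneg_left hFb
      (by positivity : (0:ℝ) ≤ 975 * (t^2 * r^2)), h2]
  have := lt_of_mul_lt_mul_left (a := t^3)
    (by linarith : t^3 * ‖2*a*z^6 + (15 - a)*z^3 + (3 - a)‖ < t^3 * (1300 * t^2 * ‖Da a z‖)) ht3pos.le
  linarith
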